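/- For every real c > 0, the sequence (a_n)_{n≥1} defined by a_n = Σ_{i=0}^∞ c^i / (∏_{k=0}^i (n+k)) · (1 + c/(n+i)) satisfies the recursion a_{n+1} = (n/c)·a_n − 1/c − 1/n for all n ≥ 1. -/

import Mathlib

open Finset

set_option maxHeartbeats 1000000

noncomputable def auxF (c : ℝ) (m i : ℕ) : ℝ :=
  c ^ i / (∏ k ∈ Finset.range (i + 1), ((m + k : ℕ) : ℝ)) * (1 + c / ((m + i : ℕ) : ℝ))

/-- For `c > 0`, the sequence `a_n = Σ_{i=0}^∞ c^i/(n(n+1)⋯(n+i)) · (1 + c/(n+i))`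
satisfies `a_{n+1} = (n/c)·a_n − 1/c − 1/n` for all `n ≥ 1`. -/
theorem stmt2 (c : ℝ) (hc : 0 < c) (a : ℕ → ℝ)
    (ha : ∀ n : ℕ, a n =
      ∑' i : ℕ, c ^ i / (∏ k ∈ Finset.range (i + 1), ((n + k : ℕ) : ℝ)) *
        (1 + c / ((n + i : ℕ) : ℝ))) :
    ∀ n : ℕ, 1 ≤ n → a (n + 1) = ((n : ℝ) / c) * a n - 1 / c - 1 / (n : ℝ) := by
  intro n hn
  have hn0 : (0:ℝ) < (n:ℝ) := by exact_mod_cast Nat.lt_of_lt_of_le Nat.zero_lt_one hn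
  -- positivity of the products
  have hP : ∀ m i : ℕ, 1 ≤ m → (0:ℝ) < ∏ k ∈ Finset.range (i + 1), ((m + k : ℕ) : ℝ) := by
    intro m i hm
    apply Finset.prod_pos
    intro k _
    exact_mod_cast Nat.lt_of_lt_of_le Nat.zero_lt_one (by omega)
  -- summability
  have hsum : ∀ m : ℕ, 1 ≤ m → Summable (auxF c m) := by
    intro m hm
    refine Summable.of_nonneg_of_le (f := fun i => (1 + c) * (c ^ i / (i.factorial : ℝ)))
      (fun i => ?_) (fun i => ?_) ((Real.summable_pow_div_factorial c).mul_left (1 + c))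
    · simp only [auxF]
      have := hP m i hm
      have hmi : (0:ℝ) < ((m + i : ℕ) : ℝ) := by exact_mod_cast Nat.lt_of_lt_of_le Nat.zero_lt_one (by omega)
      have h1 : (0:ℝ) ≤ c ^ i / (∏ k ∈ Finset.range (i + 1), ((m + k : ℕ) : ℝ)) :=
        div_nonneg (by positivity) this.le
      have h2 : (0:ℝ) ≤ 1 + c / ((m + i : ℕ) : ℝ) := by positivity
      exact mul_nonneg h1 h2
    · simp only [auxF]
      have hfactN : i.factorial ≤ ∏ k ∈ Finset.range (i + 1), (m + k) := by
        calc i.factorial ≤ (i+1).factorial := Nat.factorial_le (by omega)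
        _ = ∏ k ∈ Finset.range (i + 1), (k + 1) := by
              rw [Finset.prod_range_add_one_eq_factorial]
        _ ≤ ∏ k ∈ Finset.range (i + 1), (m + k) :=
              Finset.prod_le_prod' (fun k _ => by omega)
      have hfact : (i.factorial : ℝ) ≤ ∏ k ∈ Finset.range (i + 1), ((m + k : ℕ) : ℝ) := by
        push_cast
        exact_mod_cast hfactN
      have hfac0 : (0:ℝ) < (i.factorial : ℝ) := by exact_mod_cast i.factorial_pos
      have hmi : (1:ℝ) ≤ ((m + i : ℕ) : ℝ) := by exact_mod_cast (by omega : 1 ≤ m + i)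
      have hA : c ^ i / (∏ k ∈ Finset.range (i + 1), ((m + k : ℕ) : ℝ)) ≤ c ^ i / i.factorial :=
        div_le_div_of_nonneg_left (by positivity) hfac0 hfact
      have hB : 1 + c / ((m + i : ℕ) : ℝ) ≤ 1 + c := by
        have := div_le_self hc.le hmi
        linarith
      have h2 : (0:ℝ) ≤ 1 + c / ((m + i : ℕ) : ℝ) := by positivity
      calc (c ^ i / ∏ k ∈ Finset.range (i + 1), ((m + k : ℕ) : ℝ)) * (1 + c / ((m + i : ℕ) : ℝ)) ≤ c ^ i / i.factorial * (1 + c) := by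
            exact mul_le_mul hA hB h2 (by positivity)
        _ = (1 + c) * (c ^ i / i.factorial) := by ring
  -- key shift identity
  have key : ∀ i : ℕ, ((n:ℝ) / c) * auxF c n (i + 1) = auxF c (n + 1) i := by
    intro i
    have hprod : ∏ k ∈ Finset.range (i + 2), ((n + k : ℕ) : ℝ) =
        (∏ k ∈ Finset.range (i + 1), (((n + 1) + k : ℕ) : ℝ)) * (n : ℝ) := by
      have h2 : ∀ k ∈ Finset.range (i + 1), ((n + (k + 1) : ℕ) : ℝ) = (((n + 1) + k : ℕ) : ℝ) :=
        fun k _ => by norm_cast; omega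
      rw [Finset.prod_range_succ', Finset.prod_congr rfl h2]
      push_cast
      ring
    have hP1 : (0:ℝ) < ∏ k ∈ Finset.range (i + 1), (((n + 1) + k : ℕ) : ℝ) :=
      hP (n + 1) i (by omega)
    have hcast : ((n + (i + 1) : ℕ) : ℝ) = (((n + 1) + i : ℕ) : ℝ) := by norm_cast; omega
    simp only [auxF]
    rw [hprod, hcast]
    field_simp
    ring
  have hfn0 : ((n:ℝ) / c) * auxF c n 0 = 1 / c + 1 / (n:ℝ) := by
    simp only [auxF]
    simp only [zero_add, Finset.range_one, Finset.prod_singleton, pow_zero, Nat.add_zero]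
    field_simp
  have hsn := hsum n hn
  have hshift : ∑' i, ((n:ℝ)/c) * auxF c n i =
      ((n:ℝ)/c) * auxF c n 0 + ∑' i, ((n:ℝ)/c) * auxF c n (i + 1) :=
    Summable.tsum_eq_zero_add (hsn.mul_left _)
  have htot : ((n:ℝ)/c) * a n = ((n:ℝ)/c) * auxF c n 0 + a (n + 1) := by
    rw [ha n, ha (n + 1), ← tsum_mul_left]
    show ∑' i : ℕ, ((n:ℝ)/c) * auxF c n i =
      ((n:ℝ)/c) * auxF c n 0 + ∑' i : ℕ, auxF c (n + 1) i
    rw [hshift]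
    congr 1
    exact tsum_congr (fun i => (key i))
  rw [hfn0] at htot
  linarith
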